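/- Conversely, if (X,d) is a metric space and p > 0 is such that the generalized roundness inequality with exponent p holds for all n ≥ 2 and all choices of 2n points, then d^p is a kernel of negative type on X. -/

import Mathlib

/-- A kernel of negative type on `X`. -/
def IsNegTypeKernel {X : Type*} (ψ : X → X → ℝ) : Prop :=
  (∀ x, ψ x x = 0) ∧ (∀ x y, ψ x y = ψ y x) ∧
    ∀ (n : ℕ) (x : Fin n → X) (lam : Fin n → ℝ), (∑ i, lam i = 0) →
      ∑ i : Fin n, ∑ j : Fin n, lam i * lam j * ψ (x i) (x j) ≤ 0

/-- The generalized roundness inequality for exponent `p` on a metric space `X`. -/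
def GRIneq (X : Type*) [MetricSpace X] (p : ℝ) : Prop :=
  ∀ (n : ℕ), 2 ≤ n → ∀ a b : Fin n → X,
    ∑ q ∈ Finset.univ.filter (fun q : Fin n × Fin n => q.1 < q.2),
        (dist (a q.1) (a q.2) ^ p + dist (b q.1) (b q.2) ^ p)
      ≤ ∑ i : Fin n, ∑ j : Fin n, dist (a i) (b j) ^ p

section helpers

variable {X : Type*} [MetricSpace X] {p : ℝ}

/-- Double sum of a symmetric, zero-diagonal function equals twice the sum over
ordered pairs. -/
lemma double_eq_two_pairs {N : ℕ} (f : Fin N → Fin N → ℝ)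
    (hsym : ∀ i j, f i j = f j i) (hdiag : ∀ i, f i i = 0) :
    ∑ i, ∑ j, f i j =
      2 * ∑ q ∈ Finset.univ.filter (fun q : Fin N × Fin N => q.1 < q.2), f q.1 q.2 := by
  classical
  have h1 : ∑ i, ∑ j, f i j = ∑ q : Fin N × Fin N, f q.1 q.2 := by
    rw [← Finset.sum_product']; rfl
  have h2 := Finset.sum_filter_add_sum_filter_not (Finset.univ : Finset (Fin N × Fin N))
    (fun q => q.1 < q.2) (fun q => f q.1 q.2)
  have h3 := Finset.sum_filter_add_sum_filter_not
    (Finset.univ.filter (fun q : Fin N × Fin N => ¬ q.1 < q.2))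
    (fun q => q.2 < q.1) (fun q => f q.1 q.2)
  have h4 : (Finset.univ.filter (fun q : Fin N × Fin N => ¬ q.1 < q.2)).filter
      (fun q => q.2 < q.1) = Finset.univ.filter (fun q : Fin N × Fin N => q.2 < q.1) := by
    ext q
    simp only [Finset.mem_filter, Finset.mem_univ, true_and]
    exact ⟨fun h => h.2, fun h => ⟨asymm h, h⟩⟩
  have h5 : ∑ q ∈ (Finset.univ.filter (fun q : Fin N × Fin N => ¬ q.1 < q.2)).filter
      (fun q => ¬ q.2 < q.1), f q.1 q.2 = 0 := by
    apply Finset.sum_eq_zero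
    intro q hq
    simp only [Finset.mem_filter, Finset.mem_univ, true_and] at hq
    have : q.1 = q.2 := le_antisymm (not_lt.1 hq.2) (not_lt.1 hq.1)
    rw [this, hdiag]
  have h6 : ∑ q ∈ Finset.univ.filter (fun q : Fin N × Fin N => q.2 < q.1), f q.1 q.2
      = ∑ q ∈ Finset.univ.filter (fun q : Fin N × Fin N => q.1 < q.2), f q.1 q.2 := by
    apply Finset.sum_nbij' (i := Prod.swap) (j := Prod.swap) <;>
      simp_all [Finset.mem_filter]
  rw [h4, h6, h5, add_zero] at h3
  rw [h1, ← h2, h3]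
  ring

/-- Extended GR inequality with full double sums, valid for all `N`. -/
lemma GR_full (hp : 0 < p) (h : GRIneq X p) (N : ℕ) (a b : Fin N → X) :
    (∑ i, ∑ j, dist (a i) (a j) ^ p) + (∑ i, ∑ j, dist (b i) (b j) ^ p)
      ≤ 2 * ∑ i, ∑ j, dist (a i) (b j) ^ p := by
  have hdiag : ∀ x : X, dist x x ^ p = 0 := by
    intro x; rw [dist_self, Real.zero_rpow hp.ne']
  rcases le_or_gt 2 N with hN | hN
  · have key := h N hN a b
    rw [Finset.sum_add_distrib] at key
    rw [double_eq_two_pairs (fun i j => dist (a i) (a j) ^ p)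
        (fun i j => by rw [dist_comm]) (fun i => hdiag _),
      double_eq_two_pairs (fun i j => dist (b i) (b j) ^ p)
        (fun i j => by rw [dist_comm]) (fun i => hdiag _)]
    nlinarith [key]
  · interval_cases N
    · simp
    · simp only [Fin.sum_univ_one, hdiag]
      have : (0:ℝ) ≤ dist (a 0) (b 0) ^ p := Real.rpow_nonneg dist_nonneg p
      linarith

/-- GR inequality transported to arbitrary finite index types of equal cardinality. -/
lemma GR_fintype (hp : 0 < p) (h : GRIneq X p) {ι κ : Type} [Fintype ι] [Fintype κ]
    (hc : Fintype.card ι = Fintype.card κ) (a : ι → X) (b : κ → X) :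
    (∑ i, ∑ j, dist (a i) (a j) ^ p) + (∑ i, ∑ j, dist (b i) (b j) ^ p)
      ≤ 2 * ∑ i : ι, ∑ j : κ, dist (a i) (b j) ^ p := by
  set N := Fintype.card ι with hNdef
  have e : ι ≃ Fin N := Fintype.equivFin ι
  have e' : κ ≃ Fin N := (Fintype.equivFin κ).trans (finCongr hc.symm)
  have key := GR_full hp h N (a ∘ e.symm) (b ∘ e'.symm)
  have ha : ∀ g : ι → ℝ, ∑ j : Fin N, g (e.symm j) = ∑ i, g i := fun g => Equiv.sum_comp e.symm g
  have hb : ∀ g : κ → ℝ, ∑ j : Fin N, g (e'.symm j) = ∑ i, g i := fun g => Equiv.sum_comp e'.symm g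
  calc (∑ i, ∑ j, dist (a i) (a j) ^ p) + (∑ i, ∑ j, dist (b i) (b j) ^ p)
      = (∑ i : Fin N, ∑ j : Fin N, dist ((a ∘ e.symm) i) ((a ∘ e.symm) j) ^ p)
        + (∑ i : Fin N, ∑ j : Fin N, dist ((b ∘ e'.symm) i) ((b ∘ e'.symm) j) ^ p) := by
        rw [← ha (fun i => ∑ j, dist (a i) (a j) ^ p),
          ← hb (fun i => ∑ j, dist (b i) (b j) ^ p)]
        congr 1
        · exact Finset.sum_congr rfl (fun i _ => (ha (fun j => dist (a (e.symm i)) (a j) ^ p)).symm)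
        · exact Finset.sum_congr rfl (fun i _ => (hb (fun j => dist (b (e'.symm i)) (b j) ^ p)).symm)
    _ ≤ 2 * ∑ i : Fin N, ∑ j : Fin N, dist ((a ∘ e.symm) i) ((b ∘ e'.symm) j) ^ p := key
    _ = 2 * ∑ i : ι, ∑ j : κ, dist (a i) (b j) ^ p := by
        rw [← ha (fun i => ∑ j : κ, dist (a i) (b j) ^ p)]
        congr 1
        exact Finset.sum_congr rfl (fun i _ => hb (fun j => dist (a (e.symm i)) (b j) ^ p))

/-- Negative type inequality for natural number multiplicities. -/
lemma negType_nat (hp : 0 < p) (h : GRIneq X p) {k : ℕ} (x : Fin k → X)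
    (m n : Fin k → ℕ) (hmn : ∑ i, m i = ∑ i, n i) :
    ∑ i, ∑ j, ((m i : ℝ) - n i) * ((m j : ℝ) - n j) * dist (x i) (x j) ^ p ≤ 0 := by
  classical
  have hc : Fintype.card (Σ i : Fin k, Fin (m i)) = Fintype.card (Σ i : Fin k, Fin (n i)) := by
    simp [Fintype.card_sigma, hmn]
  have key := GR_fintype hp h hc (fun s : Σ i : Fin k, Fin (m i) => x s.1)
    (fun s : Σ i : Fin k, Fin (n i) => x s.1)
  have sig : ∀ (w : Fin k → ℕ) (g : Fin k → ℝ),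
      ∑ s : Σ i : Fin k, Fin (w i), g s.1 = ∑ i, (w i : ℝ) * g i := by
    intro w g
    rw [← Finset.univ_sigma_univ, Finset.sum_sigma]
    simp [mul_comm]
  have Sa : ∑ s : Σ i : Fin k, Fin (m i), ∑ t : Σ i : Fin k, Fin (m i),
      dist (x s.1) (x t.1) ^ p = ∑ i, ∑ j, (m i : ℝ) * m j * dist (x i) (x j) ^ p := by
    rw [sig m (fun i => ∑ t : Σ i : Fin k, Fin (m i), dist (x i) (x t.1) ^ p)]
    apply Finset.sum_congr rfl
    intro i _
    rw [sig m (fun j => dist (x i) (x j) ^ p), Finset.mul_sum]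
    exact Finset.sum_congr rfl (fun j _ => by ring)
  have Sb : ∑ s : Σ i : Fin k, Fin (n i), ∑ t : Σ i : Fin k, Fin (n i),
      dist (x s.1) (x t.1) ^ p = ∑ i, ∑ j, (n i : ℝ) * n j * dist (x i) (x j) ^ p := by
    rw [sig n (fun i => ∑ t : Σ i : Fin k, Fin (n i), dist (x i) (x t.1) ^ p)]
    apply Finset.sum_congr rfl
    intro i _
    rw [sig n (fun j => dist (x i) (x j) ^ p), Finset.mul_sum]
    exact Finset.sum_congr rfl (fun j _ => by ring)
  have Sab : ∑ s : Σ i : Fin k, Fin (m i), ∑ t : Σ i : Fin k, Fin (n i),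
      dist (x s.1) (x t.1) ^ p = ∑ i, ∑ j, (m i : ℝ) * n j * dist (x i) (x j) ^ p := by
    rw [sig m (fun i => ∑ t : Σ i : Fin k, Fin (n i), dist (x i) (x t.1) ^ p)]
    apply Finset.sum_congr rfl
    intro i _
    rw [sig n (fun j => dist (x i) (x j) ^ p), Finset.mul_sum]
    exact Finset.sum_congr rfl (fun j _ => by ring)
  rw [Sa, Sb, Sab] at key
  have expand : ∑ i, ∑ j, ((m i : ℝ) - n i) * ((m j : ℝ) - n j) * dist (x i) (x j) ^ p
      = (∑ i, ∑ j, (m i : ℝ) * m j * dist (x i) (x j) ^ p)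
        + (∑ i, ∑ j, (n i : ℝ) * n j * dist (x i) (x j) ^ p)
        - (∑ i, ∑ j, (m i : ℝ) * n j * dist (x i) (x j) ^ p)
        - (∑ i, ∑ j, (n i : ℝ) * m j * dist (x i) (x j) ^ p) := by
    have step : ∑ i, ∑ j, ((m i : ℝ) - n i) * ((m j : ℝ) - n j) * dist (x i) (x j) ^ p
        = ∑ i, ∑ j, ((m i : ℝ) * m j * dist (x i) (x j) ^ p
            + (n i : ℝ) * n j * dist (x i) (x j) ^ p
            - (m i : ℝ) * n j * dist (x i) (x j) ^ p
            - (n i : ℝ) * m j * dist (x i) (x j) ^ p) := by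
      exact Finset.sum_congr rfl (fun i _ => Finset.sum_congr rfl (fun j _ => by ring))
    rw [step]
    simp only [Finset.sum_sub_distrib, Finset.sum_add_distrib]
  have swap : ∑ i, ∑ j, (n i : ℝ) * m j * dist (x i) (x j) ^ p
      = ∑ i, ∑ j, (m i : ℝ) * n j * dist (x i) (x j) ^ p := by
    rw [Finset.sum_comm]
    refine Finset.sum_congr rfl (fun i _ => Finset.sum_congr rfl (fun j _ => ?_))
    rw [dist_comm]; ring
  rw [expand, swap]
  linarith

/-- Negative type inequality for integer weights summing to zero. -/
lemma negType_int (hp : 0 < p) (h : GRIneq X p) {k : ℕ} (x : Fin k → X)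
    (z : Fin k → ℤ) (hz : ∑ i, z i = 0) :
    ∑ i, ∑ j, (z i : ℝ) * (z j : ℝ) * dist (x i) (x j) ^ p ≤ 0 := by
  have hmn : ∑ i, (z i).toNat = ∑ i, (-(z i)).toNat := by
    have h1 : ∑ i, ((z i).toNat : ℤ) - ∑ i, ((-(z i)).toNat : ℤ) = ∑ i, z i := by
      rw [← Finset.sum_sub_distrib]
      exact Finset.sum_congr rfl (fun i _ => by omega)
    rw [hz] at h1
    have h2 : ∑ i, ((z i).toNat : ℤ) = ∑ i, ((-(z i)).toNat : ℤ) := by linarith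
    exact_mod_cast h2
  have key := negType_nat hp h x (fun i => (z i).toNat) (fun i => (-(z i)).toNat) hmn
  have cast_eq : ∀ w : ℤ, ((w.toNat : ℝ) - ((-w).toNat : ℝ)) = (w : ℝ) := by
    intro w
    have : ((w.toNat : ℤ) - ((-w).toNat : ℤ)) = w := by omega
    exact_mod_cast this
  calc ∑ i, ∑ j, (z i : ℝ) * (z j : ℝ) * dist (x i) (x j) ^ p
      = ∑ i, ∑ j, (((z i).toNat : ℝ) - ((-(z i)).toNat : ℝ))
        * (((z j).toNat : ℝ) - ((-(z j)).toNat : ℝ)) * dist (x i) (x j) ^ p := by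
        refine Finset.sum_congr rfl (fun i _ => Finset.sum_congr rfl (fun j _ => ?_))
        rw [cast_eq, cast_eq]
    _ ≤ 0 := key

end helpers

/-- If the generalized roundness inequality holds for p then d^p is of negative type. -/
theorem gr_imp_negType {X : Type*} [MetricSpace X] (p : ℝ) (hp : 0 < p)
    (h : GRIneq X p) : IsNegTypeKernel (fun x y : X => dist x y ^ p) := by
  refine ⟨fun x => by simp [Real.zero_rpow hp.ne'], fun x y => by simp [dist_comm], ?_⟩
  intro n x lam hsum
  simp only
  classical
  -- partial sums of lam, extended to ℕ
  set lam' : ℕ → ℝ := fun r => if hr : r < n then lam ⟨r, hr⟩ else 0 with hlam'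
  set s : ℕ → ℝ := fun r => ∑ j ∈ Finset.range r, lam' j with hsdef
  have hlam'_eq : ∀ i : Fin n, lam' (i : ℕ) = lam i := by
    intro i
    simp [hlam', i.isLt]
  have hsn : s n = 0 := by
    rw [hsdef]
    simp only
    rw [← Fin.sum_univ_eq_sum_range lam' n]
    rw [Finset.sum_congr rfl (fun i _ => hlam'_eq i)]
    exact hsum
  have hs0 : s 0 = 0 := by simp [hsdef]
  have hstep : ∀ i : Fin n, s ((i : ℕ) + 1) - s (i : ℕ) = lam i := by
    intro i
    rw [hsdef]
    simp only
    rw [Finset.sum_range_succ]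
    rw [hlam'_eq i]
    ring
  -- integer approximations
  set z : ℕ → Fin n → ℤ :=
    fun t i => ⌊((t : ℝ) + 1) * s ((i : ℕ) + 1)⌋ - ⌊((t : ℝ) + 1) * s (i : ℕ)⌋ with hz
  have hzsum : ∀ t, ∑ i, z t i = 0 := by
    intro t
    rw [hz]
    simp only
    rw [Fin.sum_univ_eq_sum_range (fun r => ⌊((t : ℝ) + 1) * s (r + 1)⌋ - ⌊((t : ℝ) + 1) * s r⌋) n]
    rw [Finset.sum_range_sub (fun r => ⌊((t : ℝ) + 1) * s r⌋)]
    rw [hsn, hs0]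
    simp
  set μ : ℕ → Fin n → ℝ := fun t i => (z t i : ℝ) / ((t : ℝ) + 1) with hμ
  have hT : ∀ t : ℕ, (0:ℝ) < (t : ℝ) + 1 := fun t => by positivity
  -- each Q(μ t) ≤ 0
  have hQ : ∀ t, ∑ i, ∑ j, μ t i * μ t j * dist (x i) (x j) ^ p ≤ 0 := by
    intro t
    have hint := negType_int hp h x (z t) (hzsum t)
    have heq : ∑ i, ∑ j, μ t i * μ t j * dist (x i) (x j) ^ p
        = (((t : ℝ) + 1)⁻¹) ^ 2 * ∑ i, ∑ j, (z t i : ℝ) * (z t j : ℝ) * dist (x i) (x j) ^ p := by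
      rw [Finset.mul_sum]
      refine Finset.sum_congr rfl (fun i _ => ?_)
      rw [Finset.mul_sum]
      refine Finset.sum_congr rfl (fun j _ => ?_)
      simp only [hμ]
      ring
    rw [heq]
    exact mul_nonpos_of_nonneg_of_nonpos (by positivity) hint
  -- μ t i → lam i
  have htend : ∀ i : Fin n, Filter.Tendsto (fun t : ℕ => μ t i) Filter.atTop (nhds (lam i)) := by
    intro i
    have hbound : ∀ t : ℕ, ‖μ t i - lam i‖ ≤ 2 / ((t : ℝ) + 1) := by
      intro t
      set T : ℝ := (t : ℝ) + 1 with hTdef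
      have hT0 : (0:ℝ) < T := hT t
      set u : ℝ := s ((i : ℕ) + 1)
      set v : ℝ := s (i : ℕ)
      have h1 : (⌊T * u⌋ : ℝ) ≤ T * u := Int.floor_le _
      have h1' : T * u - 1 < (⌊T * u⌋ : ℝ) := Int.sub_one_lt_floor _
      have h2 : (⌊T * v⌋ : ℝ) ≤ T * v := Int.floor_le _
      have h2' : T * v - 1 < (⌊T * v⌋ : ℝ) := Int.sub_one_lt_floor _
      have hlam_eq : lam i = u - v := (hstep i).symm
      have hμval : μ t i = ((⌊T * u⌋ : ℝ) - (⌊T * v⌋ : ℝ)) / T := by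
        rw [hμ, hz]
        push_cast
        rfl
      have key2 : |((⌊T * u⌋ : ℝ) - (⌊T * v⌋ : ℝ)) - T * (u - v)| ≤ 2 := by
        rw [abs_le]; constructor <;> linarith
      have e1 : ((⌊T * u⌋ : ℝ) - (⌊T * v⌋ : ℝ)) / T - (u - v)
          = (((⌊T * u⌋ : ℝ) - (⌊T * v⌋ : ℝ)) - T * (u - v)) / T := by
        field_simp
      rw [hμval, hlam_eq, Real.norm_eq_abs, e1, abs_div, abs_of_pos hT0]
      exact (div_le_div_iff_of_pos_right hT0).mpr key2
    have hg : Filter.Tendsto (fun t : ℕ => 2 / ((t : ℝ) + 1)) Filter.atTop (nhds 0) := by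
      have := (tendsto_one_div_add_atTop_nhds_zero_nat).const_mul (2:ℝ)
      simpa [mul_one_div, div_eq_mul_inv] using this
    have h0 : Filter.Tendsto (fun t : ℕ => μ t i - lam i) Filter.atTop (nhds 0) :=
      squeeze_zero_norm hbound hg
    have := h0.add_const (lam i)
    simpa using this
  -- the quadratic form is continuous
  have hQtend : Filter.Tendsto (fun t => ∑ i, ∑ j, μ t i * μ t j * dist (x i) (x j) ^ p)
      Filter.atTop (nhds (∑ i, ∑ j, lam i * lam j * dist (x i) (x j) ^ p)) := by
    apply tendsto_finset_sum
    intro i _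
    apply tendsto_finset_sum
    intro j _
    exact ((htend i).mul (htend j)).mul tendsto_const_nhds
  exact le_of_tendsto hQtend (Filter.Eventually.of_forall hQ)
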